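/- Let (ρ_x)_{x∈{0,1}³} be eight 4×4 density matrices such that each of the quadruples {ρ₀₀₀, ρ₀₁₁, ρ₁₀₁, ρ₁₁₀} and {ρ₀₀₁, ρ₀₁₀, ρ₁₀₀, ρ₁₁₁} consists of pairwise orthogonal rank-one orthogonal projections summing to I₄, and suppose additionally that Tr[ρ₀₀₀ρ₁₁₁] = Tr[ρ₀₁₁ρ₁₀₀] = Tr[ρ₁₀₁ρ₀₁₀] = Tr[ρ₁₁₀ρ₀₀₁] = 0 and that Tr[M₁N₁] = Tr[M₂N₂] = Tr[M₃N₃]. Then Tr[M_yN_y] = −4/3 for each y ∈ {1,2,3}, and Tr[ρ_x ρ_{x'}] = 1/3 for every pair x ≠ x' lying in opposite parity classes with x' not equal to the bitwise complement of x. -/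

import Mathlib

open Matrix
open scoped ComplexOrder

noncomputable section

abbrev Mat4 := Matrix (Fin 4) (Fin 4) ℂ

/-- parity of x₁+x₂+x₃ (addition in Fin 2 is mod 2). -/
def par (x : Fin 3 → Fin 2) : Fin 2 := x 0 + x 1 + x 2

/-- bitwise complement of x ∈ {0,1}³. -/
def bitcompl (x : Fin 3 → Fin 2) : Fin 3 → Fin 2 := fun i => x i + 1

def Mop (ρ : (Fin 3 → Fin 2) → Mat4) : Fin 3 → Mat4 :=
  ![-ρ ![0, 0, 0] - ρ ![0, 1, 1] + ρ ![1, 0, 1] + ρ ![1, 1, 0],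
    -ρ ![0, 0, 0] + ρ ![0, 1, 1] - ρ ![1, 0, 1] + ρ ![1, 1, 0],
    -ρ ![0, 0, 0] + ρ ![0, 1, 1] + ρ ![1, 0, 1] - ρ ![1, 1, 0]]

def Nop (ρ : (Fin 3 → Fin 2) → Mat4) : Fin 3 → Mat4 :=
  ![ρ ![0, 0, 1] + ρ ![0, 1, 0] - ρ ![1, 0, 0] - ρ ![1, 1, 1],
    ρ ![0, 0, 1] - ρ ![0, 1, 0] + ρ ![1, 0, 0] - ρ ![1, 1, 1],
    -ρ ![0, 0, 1] + ρ ![0, 1, 0] + ρ ![1, 0, 0] - ρ ![1, 1, 1]]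

lemma trace_pq (p q : Mat4) (hp : p.IsHermitian) (hq : q.IsHermitian)
    (hp2 : p * p = p) (hq2 : q * q = q) :
    ∃ r : ℝ, 0 ≤ r ∧ (p * q).trace = (r : ℂ) ∧ (r = 0 → p * q = 0 ∧ q * p = 0) := by
  have key : (p * q).trace = ((q * p)ᴴ * (q * p)).trace := by
    rw [conjTranspose_mul, hp.eq, hq.eq]
    rw [show p * q * (q * p) = p * (q * q) * p by rw [mul_assoc, mul_assoc, mul_assoc], hq2]
    rw [trace_mul_comm (p*q) p, ← mul_assoc, hp2]
  set A := q * p with hA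
  refine ⟨∑ i, ∑ j, Complex.normSq (A j i), ?_, ?_, ?_⟩
  · exact Finset.sum_nonneg fun i _ => Finset.sum_nonneg fun j _ => Complex.normSq_nonneg _
  · rw [key, Matrix.trace]
    push_cast
    refine Finset.sum_congr rfl fun i _ => ?_
    simp only [diag_apply, mul_apply, conjTranspose_apply]
    refine Finset.sum_congr rfl fun j _ => ?_
    simp [RCLike.star_def, Complex.normSq_eq_conj_mul_self]
  · intro hr
    have hA0 : A = 0 := by
      ext i j
      have h2 := (Finset.sum_eq_zero_iff_of_nonneg
        (fun i _ => Finset.sum_nonneg fun j _ => Complex.normSq_nonneg _)).mp hr j (Finset.mem_univ j)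
      have h4 := (Finset.sum_eq_zero_iff_of_nonneg
        (fun k _ => Complex.normSq_nonneg _)).mp h2 i (Finset.mem_univ i)
      simpa using Complex.normSq_eq_zero.mp h4
    constructor
    · have : Aᴴ = 0 := by rw [hA0]; simp
      rwa [hA, conjTranspose_mul, hp.eq, hq.eq] at this
    · exact hA0

lemma corner (p X : Mat4) (w : Fin 4 → ℂ) (hw : p = Matrix.of fun i j => w i * star (w j)) :
    p * X * p = (X * p).trace • p := by
  ext i j
  simp only [hw, mul_apply, Matrix.trace, diag_apply, Matrix.smul_apply, Matrix.of_apply,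
    Fin.sum_univ_four, smul_eq_mul]
  ring

lemma rank_one_decomp (p : Mat4) (hp : p.PosSemidef) (hp2 : p * p = p) (htr : p.trace = 1) :
    ∃ w : Fin 4 → ℂ, p = Matrix.of fun i j => w i * star (w j) := by
  have hH : p.IsHermitian := hp.1
  set U : Mat4 := (Matrix.IsHermitian.eigenvectorUnitary hH : Mat4) with hU
  have hUU : star U * U = 1 := mem_unitaryGroup_iff'.mp (Matrix.IsHermitian.eigenvectorUnitary hH).2
  have hUU' : U * star U = 1 := mem_unitaryGroup_iff.mp (Matrix.IsHermitian.eigenvectorUnitary hH).2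
  set d : Fin 4 → ℂ := RCLike.ofReal ∘ hH.eigenvalues with hd
  have hspec : p = U * diagonal d * star U := hH.spectral_theorem
  have hDiag : star U * p * U = diagonal d := by
    have h := hH.conjStarAlgAut_star_eigenvectorUnitary
    rwa [Unitary.conjStarAlgAut_star_apply] at h
  have hidem : ∀ i, d i * d i = d i := by
    intro i
    have : diagonal d * diagonal d = diagonal d := by
      rw [← hDiag]
      calc star U * p * U * (star U * p * U) = star U * p * (U * star U) * p * U := by
            simp only [mul_assoc]
        _ = star U * (p * p) * U := by rw [hUU']; simp only [mul_one, mul_assoc]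
        _ = star U * p * U := by rw [hp2, mul_assoc]
    rw [diagonal_mul_diagonal] at this
    have h2 := congrFun (congrFun this i) i
    simpa using h2
  have h01 : ∀ i, d i = 0 ∨ d i = 1 := by
    intro i
    rcases mul_eq_zero.mp (show d i * (d i - 1) = 0 by rw [mul_sub, hidem i]; ring) with h | h
    · exact Or.inl h
    · exact Or.inr (by linear_combination h)
  have hsum : d 0 + d 1 + d 2 + d 3 = 1 := by
    have : (diagonal d).trace = 1 := by
      rw [← hDiag, trace_mul_comm, ← mul_assoc, hUU', one_mul, htr]
    rw [trace_diagonal, Fin.sum_univ_four] at this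
    linear_combination this
  have key : ∀ (i₀ : Fin 4), (∀ k, d k = if k = i₀ then 1 else 0) →
      ∃ w : Fin 4 → ℂ, p = Matrix.of fun i j => w i * star (w j) := by
    intro i₀ hdi
    refine ⟨fun i => U i i₀, ?_⟩
    have e0 := hdi 0; have e1 := hdi 1; have e2 := hdi 2; have e3 := hdi 3
    ext i j
    rw [hspec]
    fin_cases i₀ <;>
      simp (config := { decide := true }) [Matrix.of_apply, mul_apply, Matrix.mul_diagonal,
        Fin.sum_univ_four, Matrix.star_apply, Matrix.diagonal_apply, e0, e1, e2, e3, Fin.ext_iff]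
  rcases h01 0 with h0 | h0 <;> rcases h01 1 with h1 | h1 <;> rcases h01 2 with h2 | h2 <;>
    rcases h01 3 with h3 | h3
  · exfalso; rw [h0, h1, h2, h3] at hsum; norm_num at hsum
  · exact key 3 (by intro k; fin_cases k <;> simp [h0, h1, h2, h3])
  · exact key 2 (by intro k; fin_cases k <;> simp [h0, h1, h2, h3])
  · exfalso; rw [h0, h1, h2, h3] at hsum; norm_num at hsum
  · exact key 1 (by intro k; fin_cases k <;> simp [h0, h1, h2, h3])
  · exfalso; rw [h0, h1, h2, h3] at hsum; norm_num at hsum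
  · exfalso; rw [h0, h1, h2, h3] at hsum; norm_num at hsum
  · exfalso; rw [h0, h1, h2, h3] at hsum; norm_num at hsum
  · exact key 0 (by intro k; fin_cases k <;> simp [h0, h1, h2, h3])
  · exfalso; rw [h0, h1, h2, h3] at hsum; norm_num at hsum
  · exfalso; rw [h0, h1, h2, h3] at hsum; norm_num at hsum
  · exfalso; rw [h0, h1, h2, h3] at hsum; norm_num at hsum
  · exfalso; rw [h0, h1, h2, h3] at hsum; norm_num at hsum
  · exfalso; rw [h0, h1, h2, h3] at hsum; norm_num at hsum
  · exfalso; rw [h0, h1, h2, h3] at hsum; norm_num at hsum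
  · exfalso; rw [h0, h1, h2, h3] at hsum; norm_num at hsum

lemma rowrel (p q u v w1 w2 : Mat4) (hsum : u + v + w1 + w2 = 1) (hpq : p * q = 0)
    (hpw1 : p * w1 = 0) (hw2q : w2 * q = 0) : p * u * q = -(p * v * q) := by
  have h : p*u*q + p*v*q + p*w1*q + p*w2*q = 0 := by
    have h0 : p * (u + v + w1 + w2) * q = 0 := by rw [hsum, mul_one, hpq]
    calc p*u*q + p*v*q + p*w1*q + p*w2*q = p * (u+v+w1+w2) * q := by noncomm_ring
      _ = 0 := h0
  have h1 : p*w1*q = 0 := by rw [hpw1, zero_mul]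
  have h2 : p*w2*q = 0 := by rw [mul_assoc, hw2q, mul_zero]
  rw [h1, h2, add_zero, add_zero] at h
  exact eq_neg_of_add_eq_zero_left h

lemma adjrel {p u q p' u' q' : Mat4} (hp : pᴴ = p) (hu : uᴴ = u) (hq : qᴴ = q)
    (hp' : p'ᴴ = p') (hu' : u'ᴴ = u') (hq' : q'ᴴ = q')
    (h : p * u * q = -(p' * u' * q')) : q * u * p = -(q' * u' * p') := by
  have h2 := congrArg conjTranspose h
  simp only [conjTranspose_mul, conjTranspose_neg, hp, hu, hq, hp', hu', hq'] at h2
  rw [← mul_assoc, ← mul_assoc] at h2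
  exact h2

lemma quadA (p q u v : Mat4)
    (cp : ∀ X, p * X * p = (X * p).trace • p)
    (cv : ∀ X, v * X * v = (X * v).trace • v)
    (hrow : p * u * q = -(p * v * q))
    (hcol : u * q * v = -(u * p * v)) :
    (p * v).trace * ((v * q).trace - (u * p).trace) = 0 := by
  have E1 : (p*u*q*v).trace = -((u*p).trace * (p*v).trace) := by
    have h1 : p*u*q*v = -(p*u*p*v) := by
      calc p*u*q*v = p*(u*q*v) := by noncomm_ring
        _ = -(p*(u*p*v)) := by rw [hcol, mul_neg]
        _ = -(p*u*p*v) := by noncomm_ring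
    rw [h1, show p*u*p*v = (p*u*p)*v from by noncomm_ring, cp u, smul_mul_assoc,
      trace_neg, trace_smul, smul_eq_mul]
  have E2 : (p*u*q*v).trace = -((p*v).trace * (v*q).trace) := by
    rw [show p*u*q*v = (p*u*q)*v from by noncomm_ring, hrow, neg_mul, trace_neg,
      trace_mul_comm (p*v*q) v, show v*(p*v*q) = (v*p*v)*q from by noncomm_ring, cv p,
      smul_mul_assoc, trace_smul, smul_eq_mul]
  linear_combination E2 - E1

lemma pairCase {x x' y y' : ℝ} (a1 : y * (x' - x) = 0) (a2 : x * (y' - y) = 0)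
    (a3 : y' * (x - x') = 0) (a4 : x' * (y - y') = 0) :
    (x = x' ∧ y = y') ∨ (x = 0 ∧ x' = 0) ∨ (y = 0 ∧ y' = 0) := by
  rcases mul_eq_zero.mp a1 with h1 | h1 <;>
  rcases mul_eq_zero.mp a2 with h2 | h2 <;>
  rcases mul_eq_zero.mp a3 with h3 | h3 <;>
  rcases mul_eq_zero.mp a4 with h4 | h4 <;>
  first
    | exact Or.inl ⟨by linarith, by linarith⟩
    | exact Or.inr (Or.inl ⟨by linarith, by linarith⟩)
    | exact Or.inr (Or.inr ⟨by linarith, by linarith⟩)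

lemma main_real (rae raf rag rbe rbf rbh rce rcg rch rdf rdg rdh : ℝ)
    (nnae : 0 ≤ rae) (nnaf : 0 ≤ raf) (nnag : 0 ≤ rag) (nnbe : 0 ≤ rbe) (nnbf : 0 ≤ rbf) (nnbh : 0 ≤ rbh) (nnce : 0 ≤ rce) (nncg : 0 ≤ rcg) (nnch : 0 ≤ rch) (nndf : 0 ≤ rdf) (nndg : 0 ≤ rdg) (nndh : 0 ≤ rdh)
    (rowa : rae + raf + rag = 1) (rowb : rbe + rbf + rbh = 1)
    (rowc : rce + rcg + rch = 1) (rowd : rdf + rdg + rdh = 1)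
    (cole : rae + rbe + rce = 1) (colf : raf + rbf + rdf = 1)
    (colg : rag + rcg + rdg = 1) (colh : rbh + rch + rdh = 1)
    (s12 : -rae - raf + rag - rbe - rbf + rbh + rce - rcg - rch + rdf - rdg - rdh = -rae + raf - rag + rbe - rbf - rbh - rce - rcg + rch - rdf + rdg - rdh)
    (s23 : -rae + raf - rag + rbe - rbf - rbh - rce - rcg + rch - rdf + rdg - rdh = rae - raf - rag - rbe + rbf - rbh - rce + rcg - rch - rdf - rdg + rdh)
    (P1 : (rae = rbf ∧ raf = rbe) ∨ (rae = 0 ∧ rbf = 0) ∨ (raf = 0 ∧ rbe = 0))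
    (P2 : (rae = rcg ∧ rag = rce) ∨ (rae = 0 ∧ rcg = 0) ∨ (rag = 0 ∧ rce = 0))
    (P3 : (raf = rdg ∧ rag = rdf) ∨ (raf = 0 ∧ rdg = 0) ∨ (rag = 0 ∧ rdf = 0))
    (P4 : (rbe = rch ∧ rbh = rce) ∨ (rbe = 0 ∧ rch = 0) ∨ (rbh = 0 ∧ rce = 0))
    (P5 : (rbf = rdh ∧ rbh = rdf) ∨ (rbf = 0 ∧ rdh = 0) ∨ (rbh = 0 ∧ rdf = 0))
    (P6 : (rcg = rdh ∧ rch = rdg) ∨ (rcg = 0 ∧ rdh = 0) ∨ (rch = 0 ∧ rdg = 0)) :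
    rae = 1/3 ∧ raf = 1/3 ∧ rag = 1/3 ∧ rbe = 1/3 ∧ rbf = 1/3 ∧ rbh = 1/3 ∧ rce = 1/3 ∧ rcg = 1/3 ∧ rch = 1/3 ∧ rdf = 1/3 ∧ rdg = 1/3 ∧ rdh = 1/3 := by
  rcases P1 with ⟨h1a, h1b⟩ | ⟨h1a, h1b⟩ | ⟨h1a, h1b⟩ <;>
    first
      | (exfalso; linarith)
      | (rcases P2 with ⟨h2a, h2b⟩ | ⟨h2a, h2b⟩ | ⟨h2a, h2b⟩ <;>
    first
      | (exfalso; linarith)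
      | (rcases P3 with ⟨h3a, h3b⟩ | ⟨h3a, h3b⟩ | ⟨h3a, h3b⟩ <;>
    first
      | (exfalso; linarith)
      | (rcases P4 with ⟨h4a, h4b⟩ | ⟨h4a, h4b⟩ | ⟨h4a, h4b⟩ <;>
    first
      | (exfalso; linarith)
      | (rcases P5 with ⟨h5a, h5b⟩ | ⟨h5a, h5b⟩ | ⟨h5a, h5b⟩ <;>
    first
      | (exfalso; linarith)
      | (rcases P6 with ⟨h6a, h6b⟩ | ⟨h6a, h6b⟩ | ⟨h6a, h6b⟩ <;>
    first
      | (exfalso; linarith)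
      | (refine ⟨?_, ?_, ?_, ?_, ?_, ?_, ?_, ?_, ?_, ?_, ?_, ?_⟩ <;> linarith))))))

set_option maxHeartbeats 1000000 in
lemma part2 (ρ : (Fin 3 → Fin 2) → Mat4)
    (Fae : (ρ ![0, 0, 0] * ρ ![0, 0, 1]).trace = 1/3)
    (Gae : (ρ ![0, 0, 1] * ρ ![0, 0, 0]).trace = 1/3)
    (Faf : (ρ ![0, 0, 0] * ρ ![0, 1, 0]).trace = 1/3)
    (Gaf : (ρ ![0, 1, 0] * ρ ![0, 0, 0]).trace = 1/3)
    (Fag : (ρ ![0, 0, 0] * ρ ![1, 0, 0]).trace = 1/3)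
    (Gag : (ρ ![1, 0, 0] * ρ ![0, 0, 0]).trace = 1/3)
    (Fbe : (ρ ![0, 1, 1] * ρ ![0, 0, 1]).trace = 1/3)
    (Gbe : (ρ ![0, 0, 1] * ρ ![0, 1, 1]).trace = 1/3)
    (Fbf : (ρ ![0, 1, 1] * ρ ![0, 1, 0]).trace = 1/3)
    (Gbf : (ρ ![0, 1, 0] * ρ ![0, 1, 1]).trace = 1/3)
    (Fbh : (ρ ![0, 1, 1] * ρ ![1, 1, 1]).trace = 1/3)
    (Gbh : (ρ ![1, 1, 1] * ρ ![0, 1, 1]).trace = 1/3)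
    (Fce : (ρ ![1, 0, 1] * ρ ![0, 0, 1]).trace = 1/3)
    (Gce : (ρ ![0, 0, 1] * ρ ![1, 0, 1]).trace = 1/3)
    (Fcg : (ρ ![1, 0, 1] * ρ ![1, 0, 0]).trace = 1/3)
    (Gcg : (ρ ![1, 0, 0] * ρ ![1, 0, 1]).trace = 1/3)
    (Fch : (ρ ![1, 0, 1] * ρ ![1, 1, 1]).trace = 1/3)
    (Gch : (ρ ![1, 1, 1] * ρ ![1, 0, 1]).trace = 1/3)
    (Fdf : (ρ ![1, 1, 0] * ρ ![0, 1, 0]).trace = 1/3)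
    (Gdf : (ρ ![0, 1, 0] * ρ ![1, 1, 0]).trace = 1/3)
    (Fdg : (ρ ![1, 1, 0] * ρ ![1, 0, 0]).trace = 1/3)
    (Gdg : (ρ ![1, 0, 0] * ρ ![1, 1, 0]).trace = 1/3)
    (Fdh : (ρ ![1, 1, 0] * ρ ![1, 1, 1]).trace = 1/3)
    (Gdh : (ρ ![1, 1, 1] * ρ ![1, 1, 0]).trace = 1/3) :
    ∀ x x', x ≠ x' → par x ≠ par x' → x' ≠ bitcompl x → (ρ x * ρ x').trace = 1 / 3 := by
  intro x x' hne hpar hcomplx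
  have hx8 : ∀ z : Fin 3 → Fin 2, z = ![0, 0, 0] ∨ z = ![0, 0, 1] ∨ z = ![0, 1, 0] ∨
      z = ![0, 1, 1] ∨ z = ![1, 0, 0] ∨ z = ![1, 0, 1] ∨ z = ![1, 1, 0] ∨ z = ![1, 1, 1] := by
    decide
  rcases hx8 x with rfl | rfl | rfl | rfl | rfl | rfl | rfl | rfl <;>
    rcases hx8 x' with rfl | rfl | rfl | rfl | rfl | rfl | rfl | rfl <;>
    first
      | exact absurd rfl hne
      | exact absurd (by decide) hpar
      | exact absurd (by decide) hcomplx
      | assumption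

set_option maxHeartbeats 2000000 in
/-- If each parity class of the eight density matrices consists of pairwise
orthogonal rank-one projections summing to I₄, the four complementary-pair
overlaps in opposite classes vanish, and Tr[M₁N₁] = Tr[M₂N₂] = Tr[M₃N₃],
then Tr[M_yN_y] = −4/3 for each y, and Tr[ρ_x ρ_{x'}] = 1/3 for every pair
x ≠ x' in opposite parity classes with x' not the bitwise complement of x. -/
theorem overlaps_are_one_third
    (ρ : (Fin 3 → Fin 2) → Mat4)
    (hρ : ∀ x, (ρ x).PosSemidef)
    (hρtr : ∀ x, (ρ x).trace = 1)
    (hproj : ∀ x, ρ x * ρ x = ρ x)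
    (horth : ∀ x x', x ≠ x' → par x = par x' → ρ x * ρ x' = 0)
    (hsum0 : ρ ![0, 0, 0] + ρ ![0, 1, 1] + ρ ![1, 0, 1] + ρ ![1, 1, 0] = 1)
    (hsum1 : ρ ![0, 0, 1] + ρ ![0, 1, 0] + ρ ![1, 0, 0] + ρ ![1, 1, 1] = 1)
    (hcompl : (ρ ![0, 0, 0] * ρ ![1, 1, 1]).trace = 0 ∧
      (ρ ![0, 1, 1] * ρ ![1, 0, 0]).trace = 0 ∧
      (ρ ![1, 0, 1] * ρ ![0, 1, 0]).trace = 0 ∧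
      (ρ ![1, 1, 0] * ρ ![0, 0, 1]).trace = 0)
    (hMN : (Mop ρ 0 * Nop ρ 0).trace = (Mop ρ 1 * Nop ρ 1).trace ∧
      (Mop ρ 1 * Nop ρ 1).trace = (Mop ρ 2 * Nop ρ 2).trace) :
    (∀ y : Fin 3, (Mop ρ y * Nop ρ y).trace = -(4 / 3)) ∧
    (∀ x x', x ≠ x' → par x ≠ par x' → x' ≠ bitcompl x →
      (ρ x * ρ x').trace = 1 / 3) := by
  have herma : (ρ ![0, 0, 0])ᴴ = ρ ![0, 0, 0] := (hρ _).1
  have hermb : (ρ ![0, 1, 1])ᴴ = ρ ![0, 1, 1] := (hρ _).1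
  have hermc : (ρ ![1, 0, 1])ᴴ = ρ ![1, 0, 1] := (hρ _).1
  have hermd : (ρ ![1, 1, 0])ᴴ = ρ ![1, 1, 0] := (hρ _).1
  have herme : (ρ ![0, 0, 1])ᴴ = ρ ![0, 0, 1] := (hρ _).1
  have hermf : (ρ ![0, 1, 0])ᴴ = ρ ![0, 1, 0] := (hρ _).1
  have hermg : (ρ ![1, 0, 0])ᴴ = ρ ![1, 0, 0] := (hρ _).1
  have hermh : (ρ ![1, 1, 1])ᴴ = ρ ![1, 1, 1] := (hρ _).1
  obtain ⟨wa, hwa⟩ := rank_one_decomp (ρ ![0, 0, 0]) (hρ _) (hproj _) (hρtr _)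
  have cA : ∀ X, ρ ![0, 0, 0] * X * ρ ![0, 0, 0] = (X * ρ ![0, 0, 0]).trace • ρ ![0, 0, 0] := fun X => corner _ X wa hwa
  obtain ⟨wb, hwb⟩ := rank_one_decomp (ρ ![0, 1, 1]) (hρ _) (hproj _) (hρtr _)
  have cB : ∀ X, ρ ![0, 1, 1] * X * ρ ![0, 1, 1] = (X * ρ ![0, 1, 1]).trace • ρ ![0, 1, 1] := fun X => corner _ X wb hwb
  obtain ⟨wc, hwc⟩ := rank_one_decomp (ρ ![1, 0, 1]) (hρ _) (hproj _) (hρtr _)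
  have cC : ∀ X, ρ ![1, 0, 1] * X * ρ ![1, 0, 1] = (X * ρ ![1, 0, 1]).trace • ρ ![1, 0, 1] := fun X => corner _ X wc hwc
  obtain ⟨wd, hwd⟩ := rank_one_decomp (ρ ![1, 1, 0]) (hρ _) (hproj _) (hρtr _)
  have cD : ∀ X, ρ ![1, 1, 0] * X * ρ ![1, 1, 0] = (X * ρ ![1, 1, 0]).trace • ρ ![1, 1, 0] := fun X => corner _ X wd hwd
  obtain ⟨we, hwe⟩ := rank_one_decomp (ρ ![0, 0, 1]) (hρ _) (hproj _) (hρtr _)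
  have cE : ∀ X, ρ ![0, 0, 1] * X * ρ ![0, 0, 1] = (X * ρ ![0, 0, 1]).trace • ρ ![0, 0, 1] := fun X => corner _ X we hwe
  obtain ⟨wf, hwf⟩ := rank_one_decomp (ρ ![0, 1, 0]) (hρ _) (hproj _) (hρtr _)
  have cF : ∀ X, ρ ![0, 1, 0] * X * ρ ![0, 1, 0] = (X * ρ ![0, 1, 0]).trace • ρ ![0, 1, 0] := fun X => corner _ X wf hwf
  obtain ⟨wg, hwg⟩ := rank_one_decomp (ρ ![1, 0, 0]) (hρ _) (hproj _) (hρtr _)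
  have cG : ∀ X, ρ ![1, 0, 0] * X * ρ ![1, 0, 0] = (X * ρ ![1, 0, 0]).trace • ρ ![1, 0, 0] := fun X => corner _ X wg hwg
  obtain ⟨wh, hwh⟩ := rank_one_decomp (ρ ![1, 1, 1]) (hρ _) (hproj _) (hρtr _)
  have cH : ∀ X, ρ ![1, 1, 1] * X * ρ ![1, 1, 1] = (X * ρ ![1, 1, 1]).trace • ρ ![1, 1, 1] := fun X => corner _ X wh hwh
  have zab : ρ ![0, 0, 0] * ρ ![0, 1, 1] = 0 := horth _ _ (by decide) (by decide)
  have zba : ρ ![0, 1, 1] * ρ ![0, 0, 0] = 0 := horth _ _ (by decide) (by decide)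
  have zac : ρ ![0, 0, 0] * ρ ![1, 0, 1] = 0 := horth _ _ (by decide) (by decide)
  have zca : ρ ![1, 0, 1] * ρ ![0, 0, 0] = 0 := horth _ _ (by decide) (by decide)
  have zad : ρ ![0, 0, 0] * ρ ![1, 1, 0] = 0 := horth _ _ (by decide) (by decide)
  have zda : ρ ![1, 1, 0] * ρ ![0, 0, 0] = 0 := horth _ _ (by decide) (by decide)
  have zbc : ρ ![0, 1, 1] * ρ ![1, 0, 1] = 0 := horth _ _ (by decide) (by decide)
  have zcb : ρ ![1, 0, 1] * ρ ![0, 1, 1] = 0 := horth _ _ (by decide) (by decide)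
  have zbd : ρ ![0, 1, 1] * ρ ![1, 1, 0] = 0 := horth _ _ (by decide) (by decide)
  have zdb : ρ ![1, 1, 0] * ρ ![0, 1, 1] = 0 := horth _ _ (by decide) (by decide)
  have zcd : ρ ![1, 0, 1] * ρ ![1, 1, 0] = 0 := horth _ _ (by decide) (by decide)
  have zdc : ρ ![1, 1, 0] * ρ ![1, 0, 1] = 0 := horth _ _ (by decide) (by decide)
  have zef : ρ ![0, 0, 1] * ρ ![0, 1, 0] = 0 := horth _ _ (by decide) (by decide)
  have zfe : ρ ![0, 1, 0] * ρ ![0, 0, 1] = 0 := horth _ _ (by decide) (by decide)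
  have zeg : ρ ![0, 0, 1] * ρ ![1, 0, 0] = 0 := horth _ _ (by decide) (by decide)
  have zge : ρ ![1, 0, 0] * ρ ![0, 0, 1] = 0 := horth _ _ (by decide) (by decide)
  have zeh : ρ ![0, 0, 1] * ρ ![1, 1, 1] = 0 := horth _ _ (by decide) (by decide)
  have zhe : ρ ![1, 1, 1] * ρ ![0, 0, 1] = 0 := horth _ _ (by decide) (by decide)
  have zfg : ρ ![0, 1, 0] * ρ ![1, 0, 0] = 0 := horth _ _ (by decide) (by decide)
  have zgf : ρ ![1, 0, 0] * ρ ![0, 1, 0] = 0 := horth _ _ (by decide) (by decide)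
  have zfh : ρ ![0, 1, 0] * ρ ![1, 1, 1] = 0 := horth _ _ (by decide) (by decide)
  have zhf : ρ ![1, 1, 1] * ρ ![0, 1, 0] = 0 := horth _ _ (by decide) (by decide)
  have zgh : ρ ![1, 0, 0] * ρ ![1, 1, 1] = 0 := horth _ _ (by decide) (by decide)
  have zhg : ρ ![1, 1, 1] * ρ ![1, 0, 0] = 0 := horth _ _ (by decide) (by decide)
  obtain ⟨rah0, _, tah0, hzah0⟩ := trace_pq (ρ ![0, 0, 0]) (ρ ![1, 1, 1]) (hρ _).1 (hρ _).1 (hproj _) (hproj _)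
  have hrah0 : rah0 = 0 := by exact_mod_cast tah0 ▸ hcompl.1
  obtain ⟨zah, zha⟩ := hzah0 hrah0
  obtain ⟨rbg0, _, tbg0, hzbg0⟩ := trace_pq (ρ ![0, 1, 1]) (ρ ![1, 0, 0]) (hρ _).1 (hρ _).1 (hproj _) (hproj _)
  have hrbg0 : rbg0 = 0 := by exact_mod_cast tbg0 ▸ hcompl.2.1
  obtain ⟨zbg, zgb⟩ := hzbg0 hrbg0
  obtain ⟨rcf0, _, tcf0, hzcf0⟩ := trace_pq (ρ ![1, 0, 1]) (ρ ![0, 1, 0]) (hρ _).1 (hρ _).1 (hproj _) (hproj _)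
  have hrcf0 : rcf0 = 0 := by exact_mod_cast tcf0 ▸ hcompl.2.2.1
  obtain ⟨zcf, zfc⟩ := hzcf0 hrcf0
  obtain ⟨rde0, _, tde0, hzde0⟩ := trace_pq (ρ ![1, 1, 0]) (ρ ![0, 0, 1]) (hρ _).1 (hρ _).1 (hproj _) (hproj _)
  have hrde0 : rde0 = 0 := by exact_mod_cast tde0 ▸ hcompl.2.2.2
  obtain ⟨zde, zed⟩ := hzde0 hrde0
  obtain ⟨rae, nnae, tae, -⟩ := trace_pq (ρ ![0, 0, 0]) (ρ ![0, 0, 1]) (hρ _).1 (hρ _).1 (hproj _) (hproj _)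
  obtain ⟨raf, nnaf, taf, -⟩ := trace_pq (ρ ![0, 0, 0]) (ρ ![0, 1, 0]) (hρ _).1 (hρ _).1 (hproj _) (hproj _)
  obtain ⟨rag, nnag, tag, -⟩ := trace_pq (ρ ![0, 0, 0]) (ρ ![1, 0, 0]) (hρ _).1 (hρ _).1 (hproj _) (hproj _)
  obtain ⟨rbe, nnbe, tbe, -⟩ := trace_pq (ρ ![0, 1, 1]) (ρ ![0, 0, 1]) (hρ _).1 (hρ _).1 (hproj _) (hproj _)
  obtain ⟨rbf, nnbf, tbf, -⟩ := trace_pq (ρ ![0, 1, 1]) (ρ ![0, 1, 0]) (hρ _).1 (hρ _).1 (hproj _) (hproj _)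
  obtain ⟨rbh, nnbh, tbh, -⟩ := trace_pq (ρ ![0, 1, 1]) (ρ ![1, 1, 1]) (hρ _).1 (hρ _).1 (hproj _) (hproj _)
  obtain ⟨rce, nnce, tce, -⟩ := trace_pq (ρ ![1, 0, 1]) (ρ ![0, 0, 1]) (hρ _).1 (hρ _).1 (hproj _) (hproj _)
  obtain ⟨rcg, nncg, tcg, -⟩ := trace_pq (ρ ![1, 0, 1]) (ρ ![1, 0, 0]) (hρ _).1 (hρ _).1 (hproj _) (hproj _)
  obtain ⟨rch, nnch, tch, -⟩ := trace_pq (ρ ![1, 0, 1]) (ρ ![1, 1, 1]) (hρ _).1 (hρ _).1 (hproj _) (hproj _)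
  obtain ⟨rdf, nndf, tdf, -⟩ := trace_pq (ρ ![1, 1, 0]) (ρ ![0, 1, 0]) (hρ _).1 (hρ _).1 (hproj _) (hproj _)
  obtain ⟨rdg, nndg, tdg, -⟩ := trace_pq (ρ ![1, 1, 0]) (ρ ![1, 0, 0]) (hρ _).1 (hρ _).1 (hproj _) (hproj _)
  obtain ⟨rdh, nndh, tdh, -⟩ := trace_pq (ρ ![1, 1, 0]) (ρ ![1, 1, 1]) (hρ _).1 (hρ _).1 (hproj _) (hproj _)
  have rowac : (ρ ![0, 0, 0] * ρ ![0, 0, 1]).trace + (ρ ![0, 0, 0] * ρ ![0, 1, 0]).trace + (ρ ![0, 0, 0] * ρ ![1, 0, 0]).trace + (ρ ![0, 0, 0] * ρ ![1, 1, 1]).trace = 1 := by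
    have h0 : ρ ![0, 0, 0] * (ρ ![0, 0, 1] + ρ ![0, 1, 0] + ρ ![1, 0, 0] + ρ ![1, 1, 1]) = ρ ![0, 0, 0] := by rw [hsum1, mul_one]
    calc (ρ ![0, 0, 0] * ρ ![0, 0, 1]).trace + (ρ ![0, 0, 0] * ρ ![0, 1, 0]).trace + (ρ ![0, 0, 0] * ρ ![1, 0, 0]).trace + (ρ ![0, 0, 0] * ρ ![1, 1, 1]).trace = (ρ ![0, 0, 0] * (ρ ![0, 0, 1] + ρ ![0, 1, 0] + ρ ![1, 0, 0] + ρ ![1, 1, 1])).trace := by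
          rw [mul_add, mul_add, mul_add, trace_add, trace_add, trace_add]
      _ = (ρ ![0, 0, 0]).trace := by rw [h0]
      _ = 1 := hρtr _
  have rowa : rae + raf + rag = 1 := by
    rw [tae, taf, tag, zah, trace_zero, add_zero] at rowac
    exact_mod_cast rowac
  have rowbc : (ρ ![0, 1, 1] * ρ ![0, 0, 1]).trace + (ρ ![0, 1, 1] * ρ ![0, 1, 0]).trace + (ρ ![0, 1, 1] * ρ ![1, 0, 0]).trace + (ρ ![0, 1, 1] * ρ ![1, 1, 1]).trace = 1 := by
    have h0 : ρ ![0, 1, 1] * (ρ ![0, 0, 1] + ρ ![0, 1, 0] + ρ ![1, 0, 0] + ρ ![1, 1, 1]) = ρ ![0, 1, 1] := by rw [hsum1, mul_one]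
    calc (ρ ![0, 1, 1] * ρ ![0, 0, 1]).trace + (ρ ![0, 1, 1] * ρ ![0, 1, 0]).trace + (ρ ![0, 1, 1] * ρ ![1, 0, 0]).trace + (ρ ![0, 1, 1] * ρ ![1, 1, 1]).trace = (ρ ![0, 1, 1] * (ρ ![0, 0, 1] + ρ ![0, 1, 0] + ρ ![1, 0, 0] + ρ ![1, 1, 1])).trace := by
          rw [mul_add, mul_add, mul_add, trace_add, trace_add, trace_add]
      _ = (ρ ![0, 1, 1]).trace := by rw [h0]
      _ = 1 := hρtr _
  have rowb : rbe + rbf + rbh = 1 := by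
    rw [tbe, tbf, tbh, zbg, trace_zero, add_zero] at rowbc
    exact_mod_cast rowbc
  have rowcc : (ρ ![1, 0, 1] * ρ ![0, 0, 1]).trace + (ρ ![1, 0, 1] * ρ ![0, 1, 0]).trace + (ρ ![1, 0, 1] * ρ ![1, 0, 0]).trace + (ρ ![1, 0, 1] * ρ ![1, 1, 1]).trace = 1 := by
    have h0 : ρ ![1, 0, 1] * (ρ ![0, 0, 1] + ρ ![0, 1, 0] + ρ ![1, 0, 0] + ρ ![1, 1, 1]) = ρ ![1, 0, 1] := by rw [hsum1, mul_one]
    calc (ρ ![1, 0, 1] * ρ ![0, 0, 1]).trace + (ρ ![1, 0, 1] * ρ ![0, 1, 0]).trace + (ρ ![1, 0, 1] * ρ ![1, 0, 0]).trace + (ρ ![1, 0, 1] * ρ ![1, 1, 1]).trace = (ρ ![1, 0, 1] * (ρ ![0, 0, 1] + ρ ![0, 1, 0] + ρ ![1, 0, 0] + ρ ![1, 1, 1])).trace := by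
          rw [mul_add, mul_add, mul_add, trace_add, trace_add, trace_add]
      _ = (ρ ![1, 0, 1]).trace := by rw [h0]
      _ = 1 := hρtr _
  have rowc : rce + rcg + rch = 1 := by
    rw [tce, tcg, tch, zcf, trace_zero, add_zero] at rowcc
    exact_mod_cast rowcc
  have rowdc : (ρ ![1, 1, 0] * ρ ![0, 0, 1]).trace + (ρ ![1, 1, 0] * ρ ![0, 1, 0]).trace + (ρ ![1, 1, 0] * ρ ![1, 0, 0]).trace + (ρ ![1, 1, 0] * ρ ![1, 1, 1]).trace = 1 := by
    have h0 : ρ ![1, 1, 0] * (ρ ![0, 0, 1] + ρ ![0, 1, 0] + ρ ![1, 0, 0] + ρ ![1, 1, 1]) = ρ ![1, 1, 0] := by rw [hsum1, mul_one]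
    calc (ρ ![1, 1, 0] * ρ ![0, 0, 1]).trace + (ρ ![1, 1, 0] * ρ ![0, 1, 0]).trace + (ρ ![1, 1, 0] * ρ ![1, 0, 0]).trace + (ρ ![1, 1, 0] * ρ ![1, 1, 1]).trace = (ρ ![1, 1, 0] * (ρ ![0, 0, 1] + ρ ![0, 1, 0] + ρ ![1, 0, 0] + ρ ![1, 1, 1])).trace := by
          rw [mul_add, mul_add, mul_add, trace_add, trace_add, trace_add]
      _ = (ρ ![1, 1, 0]).trace := by rw [h0]
      _ = 1 := hρtr _
  have rowd : rdf + rdg + rdh = 1 := by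
    rw [tdf, tdg, tdh, zde, trace_zero, zero_add] at rowdc
    exact_mod_cast rowdc
  have colec : (ρ ![0, 0, 0] * ρ ![0, 0, 1]).trace + (ρ ![0, 1, 1] * ρ ![0, 0, 1]).trace + (ρ ![1, 0, 1] * ρ ![0, 0, 1]).trace + (ρ ![1, 1, 0] * ρ ![0, 0, 1]).trace = 1 := by
    have h0 : (ρ ![0, 0, 0] + ρ ![0, 1, 1] + ρ ![1, 0, 1] + ρ ![1, 1, 0]) * ρ ![0, 0, 1] = ρ ![0, 0, 1] := by rw [hsum0, one_mul]
    calc (ρ ![0, 0, 0] * ρ ![0, 0, 1]).trace + (ρ ![0, 1, 1] * ρ ![0, 0, 1]).trace + (ρ ![1, 0, 1] * ρ ![0, 0, 1]).trace + (ρ ![1, 1, 0] * ρ ![0, 0, 1]).trace = ((ρ ![0, 0, 0] + ρ ![0, 1, 1] + ρ ![1, 0, 1] + ρ ![1, 1, 0]) * ρ ![0, 0, 1]).trace := by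
          rw [add_mul, add_mul, add_mul, trace_add, trace_add, trace_add]
      _ = (ρ ![0, 0, 1]).trace := by rw [h0]
      _ = 1 := hρtr _
  have cole : rae + rbe + rce = 1 := by
    rw [tae, tbe, tce, zde, trace_zero, add_zero] at colec
    exact_mod_cast colec
  have colfc : (ρ ![0, 0, 0] * ρ ![0, 1, 0]).trace + (ρ ![0, 1, 1] * ρ ![0, 1, 0]).trace + (ρ ![1, 0, 1] * ρ ![0, 1, 0]).trace + (ρ ![1, 1, 0] * ρ ![0, 1, 0]).trace = 1 := by
    have h0 : (ρ ![0, 0, 0] + ρ ![0, 1, 1] + ρ ![1, 0, 1] + ρ ![1, 1, 0]) * ρ ![0, 1, 0] = ρ ![0, 1, 0] := by rw [hsum0, one_mul]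
    calc (ρ ![0, 0, 0] * ρ ![0, 1, 0]).trace + (ρ ![0, 1, 1] * ρ ![0, 1, 0]).trace + (ρ ![1, 0, 1] * ρ ![0, 1, 0]).trace + (ρ ![1, 1, 0] * ρ ![0, 1, 0]).trace = ((ρ ![0, 0, 0] + ρ ![0, 1, 1] + ρ ![1, 0, 1] + ρ ![1, 1, 0]) * ρ ![0, 1, 0]).trace := by
          rw [add_mul, add_mul, add_mul, trace_add, trace_add, trace_add]
      _ = (ρ ![0, 1, 0]).trace := by rw [h0]
      _ = 1 := hρtr _
  have colf : raf + rbf + rdf = 1 := by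
    rw [taf, tbf, tdf, zcf, trace_zero, add_zero] at colfc
    exact_mod_cast colfc
  have colgc : (ρ ![0, 0, 0] * ρ ![1, 0, 0]).trace + (ρ ![0, 1, 1] * ρ ![1, 0, 0]).trace + (ρ ![1, 0, 1] * ρ ![1, 0, 0]).trace + (ρ ![1, 1, 0] * ρ ![1, 0, 0]).trace = 1 := by
    have h0 : (ρ ![0, 0, 0] + ρ ![0, 1, 1] + ρ ![1, 0, 1] + ρ ![1, 1, 0]) * ρ ![1, 0, 0] = ρ ![1, 0, 0] := by rw [hsum0, one_mul]
    calc (ρ ![0, 0, 0] * ρ ![1, 0, 0]).trace + (ρ ![0, 1, 1] * ρ ![1, 0, 0]).trace + (ρ ![1, 0, 1] * ρ ![1, 0, 0]).trace + (ρ ![1, 1, 0] * ρ ![1, 0, 0]).trace = ((ρ ![0, 0, 0] + ρ ![0, 1, 1] + ρ ![1, 0, 1] + ρ ![1, 1, 0]) * ρ ![1, 0, 0]).trace := by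
          rw [add_mul, add_mul, add_mul, trace_add, trace_add, trace_add]
      _ = (ρ ![1, 0, 0]).trace := by rw [h0]
      _ = 1 := hρtr _
  have colg : rag + rcg + rdg = 1 := by
    rw [tag, tcg, tdg, zbg, trace_zero, add_zero] at colgc
    exact_mod_cast colgc
  have colhc : (ρ ![0, 0, 0] * ρ ![1, 1, 1]).trace + (ρ ![0, 1, 1] * ρ ![1, 1, 1]).trace + (ρ ![1, 0, 1] * ρ ![1, 1, 1]).trace + (ρ ![1, 1, 0] * ρ ![1, 1, 1]).trace = 1 := by
    have h0 : (ρ ![0, 0, 0] + ρ ![0, 1, 1] + ρ ![1, 0, 1] + ρ ![1, 1, 0]) * ρ ![1, 1, 1] = ρ ![1, 1, 1] := by rw [hsum0, one_mul]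
    calc (ρ ![0, 0, 0] * ρ ![1, 1, 1]).trace + (ρ ![0, 1, 1] * ρ ![1, 1, 1]).trace + (ρ ![1, 0, 1] * ρ ![1, 1, 1]).trace + (ρ ![1, 1, 0] * ρ ![1, 1, 1]).trace = ((ρ ![0, 0, 0] + ρ ![0, 1, 1] + ρ ![1, 0, 1] + ρ ![1, 1, 0]) * ρ ![1, 1, 1]).trace := by
          rw [add_mul, add_mul, add_mul, trace_add, trace_add, trace_add]
      _ = (ρ ![1, 1, 1]).trace := by rw [h0]
      _ = 1 := hρtr _
  have colh : rbh + rch + rdh = 1 := by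
    rw [tbh, tch, tdh, zah, trace_zero, zero_add] at colhc
    exact_mod_cast colhc
  have hT1 : ((-ρ ![0, 0, 0] - ρ ![0, 1, 1] + ρ ![1, 0, 1] + ρ ![1, 1, 0]) * (ρ ![0, 0, 1] + ρ ![0, 1, 0] - ρ ![1, 0, 0] - ρ ![1, 1, 1])).trace = -(ρ ![0, 0, 0] * ρ ![0, 0, 1]).trace - (ρ ![0, 0, 0] * ρ ![0, 1, 0]).trace + (ρ ![0, 0, 0] * ρ ![1, 0, 0]).trace + (ρ ![0, 0, 0] * ρ ![1, 1, 1]).trace - (ρ ![0, 1, 1] * ρ ![0, 0, 1]).trace - (ρ ![0, 1, 1] * ρ ![0, 1, 0]).trace + (ρ ![0, 1, 1] * ρ ![1, 0, 0]).trace + (ρ ![0, 1, 1] * ρ ![1, 1, 1]).trace + (ρ ![1, 0, 1] * ρ ![0, 0, 1]).trace + (ρ ![1, 0, 1] * ρ ![0, 1, 0]).trace - (ρ ![1, 0, 1] * ρ ![1, 0, 0]).trace - (ρ ![1, 0, 1] * ρ ![1, 1, 1]).trace + (ρ ![1, 1, 0] * ρ ![0, 0, 1]).trace + (ρ ![1,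 1, 0] * ρ ![0, 1, 0]).trace - (ρ ![1, 1, 0] * ρ ![1, 0, 0]).trace - (ρ ![1, 1, 0] * ρ ![1, 1, 1]).trace := by
    simp only [sub_mul, add_mul, neg_mul, mul_sub, mul_add, mul_neg, trace_add, trace_sub, trace_neg]
    ring
  have hS1C : ((-ρ ![0, 0, 0] - ρ ![0, 1, 1] + ρ ![1, 0, 1] + ρ ![1, 1, 0]) * (ρ ![0, 0, 1] + ρ ![0, 1, 0] - ρ ![1, 0, 0] - ρ ![1, 1, 1])).trace = ((-rae - raf + rag - rbe - rbf + rbh + rce - rcg - rch + rdf - rdg - rdh : ℝ) : ℂ) := by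
    rw [hT1]
    simp only [tae, taf, tag, tbe, tbf, tbh, tce, tcg, tch, tdf, tdg, tdh, zah, zbg, zcf, zde, trace_zero]
    push_cast
    ring
  have hT2 : ((-ρ ![0, 0, 0] + ρ ![0, 1, 1] - ρ ![1, 0, 1] + ρ ![1, 1, 0]) * (ρ ![0, 0, 1] - ρ ![0, 1, 0] + ρ ![1, 0, 0] - ρ ![1, 1, 1])).trace = -(ρ ![0, 0, 0] * ρ ![0, 0, 1]).trace + (ρ ![0, 0, 0] * ρ ![0, 1, 0]).trace - (ρ ![0, 0, 0] * ρ ![1, 0, 0]).trace + (ρ ![0, 0, 0] * ρ ![1, 1, 1]).trace + (ρ ![0, 1, 1] * ρ ![0, 0, 1]).trace - (ρ ![0, 1, 1] * ρ ![0, 1, 0]).trace + (ρ ![0, 1, 1] * ρ ![1, 0, 0]).trace - (ρ ![0, 1, 1] * ρ ![1, 1, 1]).trace - (ρ ![1, 0, 1] * ρ ![0, 0, 1]).trace + (ρ ![1, 0, 1] * ρ ![0, 1, 0]).trace - (ρ ![1, 0, 1] * ρ ![1, 0, 0]).trace + (ρ ![1, 0, 1] * ρ ![1, 1, 1]).trace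 + (ρ ![1, 1, 0] * ρ ![0, 0, 1]).trace - (ρ ![1, 1, 0] * ρ ![0, 1, 0]).trace + (ρ ![1, 1, 0] * ρ ![1, 0, 0]).trace - (ρ ![1, 1, 0] * ρ ![1, 1, 1]).trace := by
    simp only [sub_mul, add_mul, neg_mul, mul_sub, mul_add, mul_neg, trace_add, trace_sub, trace_neg]
    ring
  have hS2C : ((-ρ ![0, 0, 0] + ρ ![0, 1, 1] - ρ ![1, 0, 1] + ρ ![1, 1, 0]) * (ρ ![0, 0, 1] - ρ ![0, 1, 0] + ρ ![1, 0, 0] - ρ ![1, 1, 1])).trace = ((-rae + raf - rag + rbe - rbf - rbh - rce - rcg + rch - rdf + rdg - rdh : ℝ) : ℂ) := by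
    rw [hT2]
    simp only [tae, taf, tag, tbe, tbf, tbh, tce, tcg, tch, tdf, tdg, tdh, zah, zbg, zcf, zde, trace_zero]
    push_cast
    ring
  have hT3 : ((-ρ ![0, 0, 0] + ρ ![0, 1, 1] + ρ ![1, 0, 1] - ρ ![1, 1, 0]) * (-ρ ![0, 0, 1] + ρ ![0, 1, 0] + ρ ![1, 0, 0] - ρ ![1, 1, 1])).trace = (ρ ![0, 0, 0] * ρ ![0, 0, 1]).trace - (ρ ![0, 0, 0] * ρ ![0, 1, 0]).trace - (ρ ![0, 0, 0] * ρ ![1, 0, 0]).trace + (ρ ![0, 0, 0] * ρ ![1, 1, 1]).trace - (ρ ![0, 1, 1] * ρ ![0, 0, 1]).trace + (ρ ![0, 1, 1] * ρ ![0, 1, 0]).trace + (ρ ![0, 1, 1] * ρ ![1, 0, 0]).trace - (ρ ![0, 1, 1] * ρ ![1, 1, 1]).trace - (ρ ![1, 0, 1] * ρ ![0, 0, 1]).trace + (ρ ![1, 0, 1] * ρ ![0, 1, 0]).trace + (ρ ![1, 0, 1] * ρ ![1, 0, 0]).trace - (ρ ![1, 0, 1] * ρ ![1, 1, 1]).trace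 + (ρ ![1, 1, 0] * ρ ![0, 0, 1]).trace - (ρ ![1, 1, 0] * ρ ![0, 1, 0]).trace - (ρ ![1, 1, 0] * ρ ![1, 0, 0]).trace + (ρ ![1, 1, 0] * ρ ![1, 1, 1]).trace := by
    simp only [sub_mul, add_mul, neg_mul, mul_sub, mul_add, mul_neg, trace_add, trace_sub, trace_neg]
    ring
  have hS3C : ((-ρ ![0, 0, 0] + ρ ![0, 1, 1] + ρ ![1, 0, 1] - ρ ![1, 1, 0]) * (-ρ ![0, 0, 1] + ρ ![0, 1, 0] + ρ ![1, 0, 0] - ρ ![1, 1, 1])).trace = ((rae - raf - rag - rbe + rbf - rbh - rce + rcg - rch - rdf - rdg + rdh : ℝ) : ℂ) := by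
    rw [hT3]
    simp only [tae, taf, tag, tbe, tbf, tbh, tce, tcg, tch, tdf, tdg, tdh, zah, zbg, zcf, zde, trace_zero]
    push_cast
    ring
  have hM1 : Mop ρ 0 = -ρ ![0, 0, 0] - ρ ![0, 1, 1] + ρ ![1, 0, 1] + ρ ![1, 1, 0] := rfl
  have hN1 : Nop ρ 0 = ρ ![0, 0, 1] + ρ ![0, 1, 0] - ρ ![1, 0, 0] - ρ ![1, 1, 1] := rfl
  have hM2 : Mop ρ 1 = -ρ ![0, 0, 0] + ρ ![0, 1, 1] - ρ ![1, 0, 1] + ρ ![1, 1, 0] := rfl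
  have hN2 : Nop ρ 1 = ρ ![0, 0, 1] - ρ ![0, 1, 0] + ρ ![1, 0, 0] - ρ ![1, 1, 1] := rfl
  have hM3 : Mop ρ 2 = -ρ ![0, 0, 0] + ρ ![0, 1, 1] + ρ ![1, 0, 1] - ρ ![1, 1, 0] := rfl
  have hN3 : Nop ρ 2 = -ρ ![0, 0, 1] + ρ ![0, 1, 0] + ρ ![1, 0, 0] - ρ ![1, 1, 1] := rfl
  have hmn1 := hMN.1
  have hmn2 := hMN.2
  rw [hM1, hN1, hM2, hN2, hS1C, hS2C] at hmn1
  rw [hM2, hN2, hM3, hN3, hS2C, hS3C] at hmn2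
  have s12 := Complex.ofReal_inj.mp hmn1
  have s23 := Complex.ofReal_inj.mp hmn2
  have K1sr : ρ ![0, 0, 1] + ρ ![0, 1, 0] + ρ ![1, 1, 1] + ρ ![1, 0, 0] = 1 := by rw [← hsum1]; abel
  have K1sc : ρ ![0, 0, 0] + ρ ![0, 1, 1] + ρ ![1, 1, 0] + ρ ![1, 0, 1] = 1 := by rw [← hsum0]; abel
  have K1row : ρ ![0, 0, 0] * ρ ![0, 0, 1] * ρ ![0, 1, 1] = -(ρ ![0, 0, 0] * ρ ![0, 1, 0] * ρ ![0, 1, 1]) := rowrel _ _ _ _ _ _ K1sr zab zah zgb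
  have K1col : ρ ![0, 0, 1] * ρ ![0, 0, 0] * ρ ![0, 1, 0] = -(ρ ![0, 0, 1] * ρ ![0, 1, 1] * ρ ![0, 1, 0]) := rowrel _ _ _ _ _ _ K1sc zef zed zcf
  have K1rowr : ρ ![0, 0, 0] * ρ ![0, 1, 0] * ρ ![0, 1, 1] = -(ρ ![0, 0, 0] * ρ ![0, 0, 1] * ρ ![0, 1, 1]) := by rw [K1row, neg_neg]
  have K1colr : ρ ![0, 0, 1] * ρ ![0, 1, 1] * ρ ![0, 1, 0] = -(ρ ![0, 0, 1] * ρ ![0, 0, 0] * ρ ![0, 1, 0]) := by rw [K1col, neg_neg]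
  have K1rowadj : ρ ![0, 1, 1] * ρ ![0, 0, 1] * ρ ![0, 0, 0] = -(ρ ![0, 1, 1] * ρ ![0, 1, 0] * ρ ![0, 0, 0]) := adjrel herma herme hermb herma hermf hermb K1row
  have K1rowadjr : ρ ![0, 1, 1] * ρ ![0, 1, 0] * ρ ![0, 0, 0] = -(ρ ![0, 1, 1] * ρ ![0, 0, 1] * ρ ![0, 0, 0]) := by rw [K1rowadj, neg_neg]
  have K1coladj : ρ ![0, 1, 0] * ρ ![0, 1, 1] * ρ ![0, 0, 1] = -(ρ ![0, 1, 0] * ρ ![0, 0, 0] * ρ ![0, 0, 1]) := adjrel herme hermb hermf herme herma hermf K1colr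
  have K1coladjr : ρ ![0, 1, 0] * ρ ![0, 0, 0] * ρ ![0, 0, 1] = -(ρ ![0, 1, 0] * ρ ![0, 1, 1] * ρ ![0, 0, 1]) := by rw [K1coladj, neg_neg]
  have K1A := quadA _ _ _ _ cA cF K1row K1colr
  have K1B := quadA _ _ _ _ cA cE K1rowr K1coladj
  have K1C := quadA _ _ _ _ cB cE K1rowadjr K1coladjr
  have K1D := quadA _ _ _ _ cB cF K1rowadj K1col
  rw [trace_mul_comm (ρ ![0, 1, 0]) (ρ ![0, 1, 1]), trace_mul_comm (ρ ![0, 0, 1]) (ρ ![0, 0, 0]), taf, tbf, tae] at K1A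
  have K1Ar : raf * (rbf - rae) = 0 := by exact_mod_cast K1A
  rw [trace_mul_comm (ρ ![0, 0, 1]) (ρ ![0, 1, 1]), trace_mul_comm (ρ ![0, 1, 0]) (ρ ![0, 0, 0]), tae, tbe, taf] at K1B
  have K1Br : rae * (rbe - raf) = 0 := by exact_mod_cast K1B
  rw [trace_mul_comm (ρ ![0, 0, 1]) (ρ ![0, 0, 0]), trace_mul_comm (ρ ![0, 1, 0]) (ρ ![0, 1, 1]), tbe, tae, tbf] at K1C
  have K1Cr : rbe * (rae - rbf) = 0 := by exact_mod_cast K1C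
  rw [trace_mul_comm (ρ ![0, 1, 0]) (ρ ![0, 0, 0]), trace_mul_comm (ρ ![0, 0, 1]) (ρ ![0, 1, 1]), tbf, taf, tbe] at K1D
  have K1Dr : rbf * (raf - rbe) = 0 := by exact_mod_cast K1D
  have P1 := pairCase K1Ar K1Br K1Cr K1Dr
  have K2sr : ρ ![0, 0, 1] + ρ ![1, 0, 0] + ρ ![1, 1, 1] + ρ ![0, 1, 0] = 1 := by rw [← hsum1]; abel
  have K2sc : ρ ![0, 0, 0] + ρ ![1, 0, 1] + ρ ![1, 1, 0] + ρ ![0, 1, 1] = 1 := by rw [← hsum0]; abel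
  have K2row : ρ ![0, 0, 0] * ρ ![0, 0, 1] * ρ ![1, 0, 1] = -(ρ ![0, 0, 0] * ρ ![1, 0, 0] * ρ ![1, 0, 1]) := rowrel _ _ _ _ _ _ K2sr zac zah zfc
  have K2col : ρ ![0, 0, 1] * ρ ![0, 0, 0] * ρ ![1, 0, 0] = -(ρ ![0, 0, 1] * ρ ![1, 0, 1] * ρ ![1, 0, 0]) := rowrel _ _ _ _ _ _ K2sc zeg zed zbg
  have K2rowr : ρ ![0, 0, 0] * ρ ![1, 0, 0] * ρ ![1, 0, 1] = -(ρ ![0, 0, 0] * ρ ![0, 0, 1] * ρ ![1, 0, 1]) := by rw [K2row, neg_neg]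
  have K2colr : ρ ![0, 0, 1] * ρ ![1, 0, 1] * ρ ![1, 0, 0] = -(ρ ![0, 0, 1] * ρ ![0, 0, 0] * ρ ![1, 0, 0]) := by rw [K2col, neg_neg]
  have K2rowadj : ρ ![1, 0, 1] * ρ ![0, 0, 1] * ρ ![0, 0, 0] = -(ρ ![1, 0, 1] * ρ ![1, 0, 0] * ρ ![0, 0, 0]) := adjrel herma herme hermc herma hermg hermc K2row
  have K2rowadjr : ρ ![1, 0, 1] * ρ ![1, 0, 0] * ρ ![0, 0, 0] = -(ρ ![1, 0, 1] * ρ ![0, 0, 1] * ρ ![0, 0, 0]) := by rw [K2rowadj, neg_neg]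
  have K2coladj : ρ ![1, 0, 0] * ρ ![1, 0, 1] * ρ ![0, 0, 1] = -(ρ ![1, 0, 0] * ρ ![0, 0, 0] * ρ ![0, 0, 1]) := adjrel herme hermc hermg herme herma hermg K2colr
  have K2coladjr : ρ ![1, 0, 0] * ρ ![0, 0, 0] * ρ ![0, 0, 1] = -(ρ ![1, 0, 0] * ρ ![1, 0, 1] * ρ ![0, 0, 1]) := by rw [K2coladj, neg_neg]
  have K2A := quadA _ _ _ _ cA cG K2row K2colr
  have K2B := quadA _ _ _ _ cA cE K2rowr K2coladj
  have K2C := quadA _ _ _ _ cC cE K2rowadjr K2coladjr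
  have K2D := quadA _ _ _ _ cC cG K2rowadj K2col
  rw [trace_mul_comm (ρ ![1, 0, 0]) (ρ ![1, 0, 1]), trace_mul_comm (ρ ![0, 0, 1]) (ρ ![0, 0, 0]), tag, tcg, tae] at K2A
  have K2Ar : rag * (rcg - rae) = 0 := by exact_mod_cast K2A
  rw [trace_mul_comm (ρ ![0, 0, 1]) (ρ ![1, 0, 1]), trace_mul_comm (ρ ![1, 0, 0]) (ρ ![0, 0, 0]), tae, tce, tag] at K2B
  have K2Br : rae * (rce - rag) = 0 := by exact_mod_cast K2B
  rw [trace_mul_comm (ρ ![0, 0, 1]) (ρ ![0, 0, 0]), trace_mul_comm (ρ ![1, 0, 0]) (ρ ![1, 0, 1]), tce, tae, tcg] at K2C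
  have K2Cr : rce * (rae - rcg) = 0 := by exact_mod_cast K2C
  rw [trace_mul_comm (ρ ![1, 0, 0]) (ρ ![0, 0, 0]), trace_mul_comm (ρ ![0, 0, 1]) (ρ ![1, 0, 1]), tcg, tag, tce] at K2D
  have K2Dr : rcg * (rag - rce) = 0 := by exact_mod_cast K2D
  have P2 := pairCase K2Ar K2Br K2Cr K2Dr
  have K3sr : ρ ![0, 1, 0] + ρ ![1, 0, 0] + ρ ![1, 1, 1] + ρ ![0, 0, 1] = 1 := by rw [← hsum1]; abel
  have K3sc : ρ ![0, 0, 0] + ρ ![1, 1, 0] + ρ ![1, 0, 1] + ρ ![0, 1, 1] = 1 := by rw [← hsum0]; abel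
  have K3row : ρ ![0, 0, 0] * ρ ![0, 1, 0] * ρ ![1, 1, 0] = -(ρ ![0, 0, 0] * ρ ![1, 0, 0] * ρ ![1, 1, 0]) := rowrel _ _ _ _ _ _ K3sr zad zah zed
  have K3col : ρ ![0, 1, 0] * ρ ![0, 0, 0] * ρ ![1, 0, 0] = -(ρ ![0, 1, 0] * ρ ![1, 1, 0] * ρ ![1, 0, 0]) := rowrel _ _ _ _ _ _ K3sc zfg zfc zbg
  have K3rowr : ρ ![0, 0, 0] * ρ ![1, 0, 0] * ρ ![1, 1, 0] = -(ρ ![0, 0, 0] * ρ ![0, 1, 0] * ρ ![1, 1, 0]) := by rw [K3row, neg_neg]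
  have K3colr : ρ ![0, 1, 0] * ρ ![1, 1, 0] * ρ ![1, 0, 0] = -(ρ ![0, 1, 0] * ρ ![0, 0, 0] * ρ ![1, 0, 0]) := by rw [K3col, neg_neg]
  have K3rowadj : ρ ![1, 1, 0] * ρ ![0, 1, 0] * ρ ![0, 0, 0] = -(ρ ![1, 1, 0] * ρ ![1, 0, 0] * ρ ![0, 0, 0]) := adjrel herma hermf hermd herma hermg hermd K3row
  have K3rowadjr : ρ ![1, 1, 0] * ρ ![1, 0, 0] * ρ ![0, 0, 0] = -(ρ ![1, 1, 0] * ρ ![0, 1, 0] * ρ ![0, 0, 0]) := by rw [K3rowadj, neg_neg]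
  have K3coladj : ρ ![1, 0, 0] * ρ ![1, 1, 0] * ρ ![0, 1, 0] = -(ρ ![1, 0, 0] * ρ ![0, 0, 0] * ρ ![0, 1, 0]) := adjrel hermf hermd hermg hermf herma hermg K3colr
  have K3coladjr : ρ ![1, 0, 0] * ρ ![0, 0, 0] * ρ ![0, 1, 0] = -(ρ ![1, 0, 0] * ρ ![1, 1, 0] * ρ ![0, 1, 0]) := by rw [K3coladj, neg_neg]
  have K3A := quadA _ _ _ _ cA cG K3row K3colr
  have K3B := quadA _ _ _ _ cA cF K3rowr K3coladj
  have K3C := quadA _ _ _ _ cD cF K3rowadjr K3coladjr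
  have K3D := quadA _ _ _ _ cD cG K3rowadj K3col
  rw [trace_mul_comm (ρ ![1, 0, 0]) (ρ ![1, 1, 0]), trace_mul_comm (ρ ![0, 1, 0]) (ρ ![0, 0, 0]), tag, tdg, taf] at K3A
  have K3Ar : rag * (rdg - raf) = 0 := by exact_mod_cast K3A
  rw [trace_mul_comm (ρ ![0, 1, 0]) (ρ ![1, 1, 0]), trace_mul_comm (ρ ![1, 0, 0]) (ρ ![0, 0, 0]), taf, tdf, tag] at K3B
  have K3Br : raf * (rdf - rag) = 0 := by exact_mod_cast K3B
  rw [trace_mul_comm (ρ ![0, 1, 0]) (ρ ![0, 0, 0]), trace_mul_comm (ρ ![1, 0, 0]) (ρ ![1, 1, 0]), tdf, taf, tdg] at K3C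
  have K3Cr : rdf * (raf - rdg) = 0 := by exact_mod_cast K3C
  rw [trace_mul_comm (ρ ![1, 0, 0]) (ρ ![0, 0, 0]), trace_mul_comm (ρ ![0, 1, 0]) (ρ ![1, 1, 0]), tdg, tag, tdf] at K3D
  have K3Dr : rdg * (rag - rdf) = 0 := by exact_mod_cast K3D
  have P3 := pairCase K3Ar K3Br K3Cr K3Dr
  have K4sr : ρ ![0, 0, 1] + ρ ![1, 1, 1] + ρ ![1, 0, 0] + ρ ![0, 1, 0] = 1 := by rw [← hsum1]; abel
  have K4sc : ρ ![0, 1, 1] + ρ ![1, 0, 1] + ρ ![1, 1, 0] + ρ ![0, 0, 0] = 1 := by rw [← hsum0]; abel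
  have K4row : ρ ![0, 1, 1] * ρ ![0, 0, 1] * ρ ![1, 0, 1] = -(ρ ![0, 1, 1] * ρ ![1, 1, 1] * ρ ![1, 0, 1]) := rowrel _ _ _ _ _ _ K4sr zbc zbg zfc
  have K4col : ρ ![0, 0, 1] * ρ ![0, 1, 1] * ρ ![1, 1, 1] = -(ρ ![0, 0, 1] * ρ ![1, 0, 1] * ρ ![1, 1, 1]) := rowrel _ _ _ _ _ _ K4sc zeh zed zah
  have K4rowr : ρ ![0, 1, 1] * ρ ![1, 1, 1] * ρ ![1, 0, 1] = -(ρ ![0, 1, 1] * ρ ![0, 0, 1] * ρ ![1, 0, 1]) := by rw [K4row, neg_neg]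
  have K4colr : ρ ![0, 0, 1] * ρ ![1, 0, 1] * ρ ![1, 1, 1] = -(ρ ![0, 0, 1] * ρ ![0, 1, 1] * ρ ![1, 1, 1]) := by rw [K4col, neg_neg]
  have K4rowadj : ρ ![1, 0, 1] * ρ ![0, 0, 1] * ρ ![0, 1, 1] = -(ρ ![1, 0, 1] * ρ ![1, 1, 1] * ρ ![0, 1, 1]) := adjrel hermb herme hermc hermb hermh hermc K4row
  have K4rowadjr : ρ ![1, 0, 1] * ρ ![1, 1, 1] * ρ ![0, 1, 1] = -(ρ ![1, 0, 1] * ρ ![0, 0, 1] * ρ ![0, 1, 1]) := by rw [K4rowadj, neg_neg]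
  have K4coladj : ρ ![1, 1, 1] * ρ ![1, 0, 1] * ρ ![0, 0, 1] = -(ρ ![1, 1, 1] * ρ ![0, 1, 1] * ρ ![0, 0, 1]) := adjrel herme hermc hermh herme hermb hermh K4colr
  have K4coladjr : ρ ![1, 1, 1] * ρ ![0, 1, 1] * ρ ![0, 0, 1] = -(ρ ![1, 1, 1] * ρ ![1, 0, 1] * ρ ![0, 0, 1]) := by rw [K4coladj, neg_neg]
  have K4A := quadA _ _ _ _ cB cH K4row K4colr
  have K4B := quadA _ _ _ _ cB cE K4rowr K4coladj
  have K4C := quadA _ _ _ _ cC cE K4rowadjr K4coladjr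
  have K4D := quadA _ _ _ _ cC cH K4rowadj K4col
  rw [trace_mul_comm (ρ ![1, 1, 1]) (ρ ![1, 0, 1]), trace_mul_comm (ρ ![0, 0, 1]) (ρ ![0, 1, 1]), tbh, tch, tbe] at K4A
  have K4Ar : rbh * (rch - rbe) = 0 := by exact_mod_cast K4A
  rw [trace_mul_comm (ρ ![0, 0, 1]) (ρ ![1, 0, 1]), trace_mul_comm (ρ ![1, 1, 1]) (ρ ![0, 1, 1]), tbe, tce, tbh] at K4B
  have K4Br : rbe * (rce - rbh) = 0 := by exact_mod_cast K4B
  rw [trace_mul_comm (ρ ![0, 0, 1]) (ρ ![0, 1, 1]), trace_mul_comm (ρ ![1, 1, 1]) (ρ ![1, 0, 1]), tce, tbe, tch] at K4C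
  have K4Cr : rce * (rbe - rch) = 0 := by exact_mod_cast K4C
  rw [trace_mul_comm (ρ ![1, 1, 1]) (ρ ![0, 1, 1]), trace_mul_comm (ρ ![0, 0, 1]) (ρ ![1, 0, 1]), tch, tbh, tce] at K4D
  have K4Dr : rch * (rbh - rce) = 0 := by exact_mod_cast K4D
  have P4 := pairCase K4Ar K4Br K4Cr K4Dr
  have K5sr : ρ ![0, 1, 0] + ρ ![1, 1, 1] + ρ ![1, 0, 0] + ρ ![0, 0, 1] = 1 := by rw [← hsum1]; abel
  have K5sc : ρ ![0, 1, 1] + ρ ![1, 1, 0] + ρ ![1, 0, 1] + ρ ![0, 0, 0] = 1 := by rw [← hsum0]; abel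
  have K5row : ρ ![0, 1, 1] * ρ ![0, 1, 0] * ρ ![1, 1, 0] = -(ρ ![0, 1, 1] * ρ ![1, 1, 1] * ρ ![1, 1, 0]) := rowrel _ _ _ _ _ _ K5sr zbd zbg zed
  have K5col : ρ ![0, 1, 0] * ρ ![0, 1, 1] * ρ ![1, 1, 1] = -(ρ ![0, 1, 0] * ρ ![1, 1, 0] * ρ ![1, 1, 1]) := rowrel _ _ _ _ _ _ K5sc zfh zfc zah
  have K5rowr : ρ ![0, 1, 1] * ρ ![1, 1, 1] * ρ ![1, 1, 0] = -(ρ ![0, 1, 1] * ρ ![0, 1, 0] * ρ ![1, 1, 0]) := by rw [K5row, neg_neg]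
  have K5colr : ρ ![0, 1, 0] * ρ ![1, 1, 0] * ρ ![1, 1, 1] = -(ρ ![0, 1, 0] * ρ ![0, 1, 1] * ρ ![1, 1, 1]) := by rw [K5col, neg_neg]
  have K5rowadj : ρ ![1, 1, 0] * ρ ![0, 1, 0] * ρ ![0, 1, 1] = -(ρ ![1, 1, 0] * ρ ![1, 1, 1] * ρ ![0, 1, 1]) := adjrel hermb hermf hermd hermb hermh hermd K5row
  have K5rowadjr : ρ ![1, 1, 0] * ρ ![1, 1, 1] * ρ ![0, 1, 1] = -(ρ ![1, 1, 0] * ρ ![0, 1, 0] * ρ ![0, 1, 1]) := by rw [K5rowadj, neg_neg]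
  have K5coladj : ρ ![1, 1, 1] * ρ ![1, 1, 0] * ρ ![0, 1, 0] = -(ρ ![1, 1, 1] * ρ ![0, 1, 1] * ρ ![0, 1, 0]) := adjrel hermf hermd hermh hermf hermb hermh K5colr
  have K5coladjr : ρ ![1, 1, 1] * ρ ![0, 1, 1] * ρ ![0, 1, 0] = -(ρ ![1, 1, 1] * ρ ![1, 1, 0] * ρ ![0, 1, 0]) := by rw [K5coladj, neg_neg]
  have K5A := quadA _ _ _ _ cB cH K5row K5colr
  have K5B := quadA _ _ _ _ cB cF K5rowr K5coladj
  have K5C := quadA _ _ _ _ cD cF K5rowadjr K5coladjr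
  have K5D := quadA _ _ _ _ cD cH K5rowadj K5col
  rw [trace_mul_comm (ρ ![1, 1, 1]) (ρ ![1, 1, 0]), trace_mul_comm (ρ ![0, 1, 0]) (ρ ![0, 1, 1]), tbh, tdh, tbf] at K5A
  have K5Ar : rbh * (rdh - rbf) = 0 := by exact_mod_cast K5A
  rw [trace_mul_comm (ρ ![0, 1, 0]) (ρ ![1, 1, 0]), trace_mul_comm (ρ ![1, 1, 1]) (ρ ![0, 1, 1]), tbf, tdf, tbh] at K5B
  have K5Br : rbf * (rdf - rbh) = 0 := by exact_mod_cast K5B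
  rw [trace_mul_comm (ρ ![0, 1, 0]) (ρ ![0, 1, 1]), trace_mul_comm (ρ ![1, 1, 1]) (ρ ![1, 1, 0]), tdf, tbf, tdh] at K5C
  have K5Cr : rdf * (rbf - rdh) = 0 := by exact_mod_cast K5C
  rw [trace_mul_comm (ρ ![1, 1, 1]) (ρ ![0, 1, 1]), trace_mul_comm (ρ ![0, 1, 0]) (ρ ![1, 1, 0]), tdh, tbh, tdf] at K5D
  have K5Dr : rdh * (rbh - rdf) = 0 := by exact_mod_cast K5D
  have P5 := pairCase K5Ar K5Br K5Cr K5Dr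
  have K6sr : ρ ![1, 0, 0] + ρ ![1, 1, 1] + ρ ![0, 1, 0] + ρ ![0, 0, 1] = 1 := by rw [← hsum1]; abel
  have K6sc : ρ ![1, 0, 1] + ρ ![1, 1, 0] + ρ ![0, 1, 1] + ρ ![0, 0, 0] = 1 := by rw [← hsum0]; abel
  have K6row : ρ ![1, 0, 1] * ρ ![1, 0, 0] * ρ ![1, 1, 0] = -(ρ ![1, 0, 1] * ρ ![1, 1, 1] * ρ ![1, 1, 0]) := rowrel _ _ _ _ _ _ K6sr zcd zcf zed
  have K6col : ρ ![1, 0, 0] * ρ ![1, 0, 1] * ρ ![1, 1, 1] = -(ρ ![1, 0, 0] * ρ ![1, 1, 0] * ρ ![1, 1, 1]) := rowrel _ _ _ _ _ _ K6sc zgh zgb zah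
  have K6rowr : ρ ![1, 0, 1] * ρ ![1, 1, 1] * ρ ![1, 1, 0] = -(ρ ![1, 0, 1] * ρ ![1, 0, 0] * ρ ![1, 1, 0]) := by rw [K6row, neg_neg]
  have K6colr : ρ ![1, 0, 0] * ρ ![1, 1, 0] * ρ ![1, 1, 1] = -(ρ ![1, 0, 0] * ρ ![1, 0, 1] * ρ ![1, 1, 1]) := by rw [K6col, neg_neg]
  have K6rowadj : ρ ![1, 1, 0] * ρ ![1, 0, 0] * ρ ![1, 0, 1] = -(ρ ![1, 1, 0] * ρ ![1, 1, 1] * ρ ![1, 0, 1]) := adjrel hermc hermg hermd hermc hermh hermd K6row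
  have K6rowadjr : ρ ![1, 1, 0] * ρ ![1, 1, 1] * ρ ![1, 0, 1] = -(ρ ![1, 1, 0] * ρ ![1, 0, 0] * ρ ![1, 0, 1]) := by rw [K6rowadj, neg_neg]
  have K6coladj : ρ ![1, 1, 1] * ρ ![1, 1, 0] * ρ ![1, 0, 0] = -(ρ ![1, 1, 1] * ρ ![1, 0, 1] * ρ ![1, 0, 0]) := adjrel hermg hermd hermh hermg hermc hermh K6colr
  have K6coladjr : ρ ![1, 1, 1] * ρ ![1, 0, 1] * ρ ![1, 0, 0] = -(ρ ![1, 1, 1] * ρ ![1, 1, 0] * ρ ![1, 0, 0]) := by rw [K6coladj, neg_neg]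
  have K6A := quadA _ _ _ _ cC cH K6row K6colr
  have K6B := quadA _ _ _ _ cC cG K6rowr K6coladj
  have K6C := quadA _ _ _ _ cD cG K6rowadjr K6coladjr
  have K6D := quadA _ _ _ _ cD cH K6rowadj K6col
  rw [trace_mul_comm (ρ ![1, 1, 1]) (ρ ![1, 1, 0]), trace_mul_comm (ρ ![1, 0, 0]) (ρ ![1, 0, 1]), tch, tdh, tcg] at K6A
  have K6Ar : rch * (rdh - rcg) = 0 := by exact_mod_cast K6A
  rw [trace_mul_comm (ρ ![1, 0, 0]) (ρ ![1, 1, 0]), trace_mul_comm (ρ ![1, 1, 1]) (ρ ![1, 0, 1]), tcg, tdg, tch] at K6B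
  have K6Br : rcg * (rdg - rch) = 0 := by exact_mod_cast K6B
  rw [trace_mul_comm (ρ ![1, 0, 0]) (ρ ![1, 0, 1]), trace_mul_comm (ρ ![1, 1, 1]) (ρ ![1, 1, 0]), tdg, tcg, tdh] at K6C
  have K6Cr : rdg * (rcg - rdh) = 0 := by exact_mod_cast K6C
  rw [trace_mul_comm (ρ ![1, 1, 1]) (ρ ![1, 0, 1]), trace_mul_comm (ρ ![1, 0, 0]) (ρ ![1, 1, 0]), tdh, tch, tdg] at K6D
  have K6Dr : rdh * (rch - rdg) = 0 := by exact_mod_cast K6D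
  have P6 := pairCase K6Ar K6Br K6Cr K6Dr
  obtain ⟨vae, vaf, vag, vbe, vbf, vbh, vce, vcg, vch, vdf, vdg, vdh⟩ :=
    main_real rae raf rag rbe rbf rbh rce rcg rch rdf rdg rdh nnae nnaf nnag nnbe nnbf nnbh nnce nncg nnch nndf nndg nndh
      rowa rowb rowc rowd cole colf colg colh s12 s23 P1 P2 P3 P4 P5 P6
  have part1_1 : (Mop ρ 0 * Nop ρ 0).trace = -(4/3) := by
    rw [hM1, hN1, hS1C, vae, vaf, vag, vbe, vbf, vbh, vce, vcg, vch, vdf, vdg, vdh]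
    norm_num
  have part1_2 : (Mop ρ 1 * Nop ρ 1).trace = -(4/3) := by
    rw [hM2, hN2, hS2C, vae, vaf, vag, vbe, vbf, vbh, vce, vcg, vch, vdf, vdg, vdh]
    norm_num
  have part1_3 : (Mop ρ 2 * Nop ρ 2).trace = -(4/3) := by
    rw [hM3, hN3, hS3C, vae, vaf, vag, vbe, vbf, vbh, vce, vcg, vch, vdf, vdg, vdh]
    norm_num
  have Fae : (ρ ![0, 0, 0] * ρ ![0, 0, 1]).trace = 1/3 := by rw [tae, vae]; norm_num
  have Gae : (ρ ![0, 0, 1] * ρ ![0, 0, 0]).trace = 1/3 := by rw [trace_mul_comm]; exact Fae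
  have Faf : (ρ ![0, 0, 0] * ρ ![0, 1, 0]).trace = 1/3 := by rw [taf, vaf]; norm_num
  have Gaf : (ρ ![0, 1, 0] * ρ ![0, 0, 0]).trace = 1/3 := by rw [trace_mul_comm]; exact Faf
  have Fag : (ρ ![0, 0, 0] * ρ ![1, 0, 0]).trace = 1/3 := by rw [tag, vag]; norm_num
  have Gag : (ρ ![1, 0, 0] * ρ ![0, 0, 0]).trace = 1/3 := by rw [trace_mul_comm]; exact Fag
  have Fbe : (ρ ![0, 1, 1] * ρ ![0, 0, 1]).trace = 1/3 := by rw [tbe, vbe]; norm_num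
  have Gbe : (ρ ![0, 0, 1] * ρ ![0, 1, 1]).trace = 1/3 := by rw [trace_mul_comm]; exact Fbe
  have Fbf : (ρ ![0, 1, 1] * ρ ![0, 1, 0]).trace = 1/3 := by rw [tbf, vbf]; norm_num
  have Gbf : (ρ ![0, 1, 0] * ρ ![0, 1, 1]).trace = 1/3 := by rw [trace_mul_comm]; exact Fbf
  have Fbh : (ρ ![0, 1, 1] * ρ ![1, 1, 1]).trace = 1/3 := by rw [tbh, vbh]; norm_num
  have Gbh : (ρ ![1, 1, 1] * ρ ![0, 1, 1]).trace = 1/3 := by rw [trace_mul_comm]; exact Fbh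
  have Fce : (ρ ![1, 0, 1] * ρ ![0, 0, 1]).trace = 1/3 := by rw [tce, vce]; norm_num
  have Gce : (ρ ![0, 0, 1] * ρ ![1, 0, 1]).trace = 1/3 := by rw [trace_mul_comm]; exact Fce
  have Fcg : (ρ ![1, 0, 1] * ρ ![1, 0, 0]).trace = 1/3 := by rw [tcg, vcg]; norm_num
  have Gcg : (ρ ![1, 0, 0] * ρ ![1, 0, 1]).trace = 1/3 := by rw [trace_mul_comm]; exact Fcg
  have Fch : (ρ ![1, 0, 1] * ρ ![1, 1, 1]).trace = 1/3 := by rw [tch, vch]; norm_num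
  have Gch : (ρ ![1, 1, 1] * ρ ![1, 0, 1]).trace = 1/3 := by rw [trace_mul_comm]; exact Fch
  have Fdf : (ρ ![1, 1, 0] * ρ ![0, 1, 0]).trace = 1/3 := by rw [tdf, vdf]; norm_num
  have Gdf : (ρ ![0, 1, 0] * ρ ![1, 1, 0]).trace = 1/3 := by rw [trace_mul_comm]; exact Fdf
  have Fdg : (ρ ![1, 1, 0] * ρ ![1, 0, 0]).trace = 1/3 := by rw [tdg, vdg]; norm_num
  have Gdg : (ρ ![1, 0, 0] * ρ ![1, 1, 0]).trace = 1/3 := by rw [trace_mul_comm]; exact Fdg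
  have Fdh : (ρ ![1, 1, 0] * ρ ![1, 1, 1]).trace = 1/3 := by rw [tdh, vdh]; norm_num
  have Gdh : (ρ ![1, 1, 1] * ρ ![1, 1, 0]).trace = 1/3 := by rw [trace_mul_comm]; exact Fdh
  refine ⟨?_, part2 ρ Fae Gae Faf Gaf Fag Gag Fbe Gbe Fbf Gbf Fbh Gbh Fce Gce Fcg Gcg Fch Gch Fdf Gdf Fdg Gdg Fdh Gdh⟩
  intro y
  fin_cases y
  · exact part1_1
  · exact part1_2
  · exact part1_3
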